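/- Let Q be a d×d real Markov generator and M = exp(Q). If the entries satisfy M i j > 0 and M j k > 0 for indices i, j, k, then M i k > 0. -/

import Mathlib

open Matrix NormedSpace Nat

namespace ExpGenAux

variable {d : ℕ}

lemma pow_entry_nonneg (A : Matrix (Fin d) (Fin d) ℝ) (hA : ∀ i j, 0 ≤ A i j) :
    ∀ (n : ℕ) (i j : Fin d), 0 ≤ (A ^ n) i j := by
  intro n
  induction n with
  | zero =>
    intro i j
    rw [pow_zero, Matrix.one_apply]
    split_ifs <;> norm_num
  | succ n ih =>
    intro i j
    rw [pow_succ, Matrix.mul_apply]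
    exact Finset.sum_nonneg fun l _ => mul_nonneg (ih i l) (hA l j)

lemma pow_entry_le (A : Matrix (Fin d) (Fin d) ℝ) :
    ∀ (n : ℕ) (i j : Fin d), |(A ^ n) i j| ≤ (d * (∑ p, ∑ q, |A p q|)) ^ n := by
  set C : ℝ := ∑ p, ∑ q, |A p q| with hC
  have hC0 : 0 ≤ C := Finset.sum_nonneg fun p _ => Finset.sum_nonneg fun q _ => abs_nonneg _
  have hentry : ∀ p q, |A p q| ≤ C := by
    intro p q
    calc |A p q| ≤ ∑ q', |A p q'| :=
          Finset.single_le_sum (fun q' _ => abs_nonneg (A p q')) (Finset.mem_univ q)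
      _ ≤ C := Finset.single_le_sum
          (fun p' _ => Finset.sum_nonneg fun q' _ => abs_nonneg (A p' q')) (Finset.mem_univ p)
  intro n
  induction n with
  | zero =>
    intro i j
    rw [pow_zero, Matrix.one_apply]
    split_ifs <;> simp
  | succ n ih =>
    intro i j
    rw [pow_succ, Matrix.mul_apply]
    calc |∑ l, (A ^ n) i l * A l j| ≤ ∑ l, |(A ^ n) i l * A l j| :=
          Finset.abs_sum_le_sum_abs _ _
      _ ≤ ∑ _l : Fin d, (d * C) ^ n * C := by
          refine Finset.sum_le_sum fun l _ => ?_
          rw [abs_mul]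
          exact mul_le_mul (ih i l) (hentry l j) (abs_nonneg _)
            (pow_nonneg (by positivity) n)
      _ = (d : ℝ) * ((d * C) ^ n * C) := by
          rw [Finset.sum_const, Finset.card_univ, Fintype.card_fin, nsmul_eq_mul]
      _ = (d * C) ^ (n + 1) := by ring

lemma entry_summable (A : Matrix (Fin d) (Fin d) ℝ) (i j : Fin d) :
    Summable fun n : ℕ => ((n ! : ℝ))⁻¹ * (A ^ n) i j := by
  set C : ℝ := d * (∑ p, ∑ q, |A p q|)
  have h : Summable fun n : ℕ => C ^ n / (n ! : ℝ) := Real.summable_pow_div_factorial C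
  refine (h.of_nonneg_of_le (fun n => abs_nonneg _) fun n => ?_).of_abs
  rw [abs_mul, abs_inv, abs_of_nonneg (by positivity : (0:ℝ) ≤ (n ! : ℝ)), div_eq_mul_inv,
    mul_comm (C ^ n)]
  exact mul_le_mul_of_nonneg_left (pow_entry_le A n i j) (by positivity)

lemma exp_entry (A : Matrix (Fin d) (Fin d) ℝ) (i j : Fin d) :
    NormedSpace.exp A i j = ∑' n : ℕ, ((n ! : ℝ))⁻¹ * (A ^ n) i j := by
  rw [NormedSpace.exp_eq_tsum ℝ]
  have hsum : Summable fun n : ℕ => ((n ! : ℝ))⁻¹ • A ^ n := by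
    exact Pi.summable.mpr fun p => Pi.summable.mpr fun q => entry_summable A p q
  show (∑' n : ℕ, ((n ! : ℝ))⁻¹ • A ^ n) i j = _
  erw [tsum_apply hsum, tsum_apply (Pi.summable.mp hsum i)]
  rfl

end ExpGenAux

/-- A Markov generator (rate matrix): nonnegative off-diagonal entries,
each row sums to 0. -/
def IsGenerator {d : ℕ} (Q : Matrix (Fin d) (Fin d) ℝ) : Prop :=
  (∀ i j, i ≠ j → 0 ≤ Q i j) ∧ ∀ i, ∑ j, Q i j = 0

theorem exp_generator_pos_trans (d : ℕ) (Q : Matrix (Fin d) (Fin d) ℝ)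
    (hQ : IsGenerator Q) (M : Matrix (Fin d) (Fin d) ℝ)
    (hM : M = NormedSpace.exp Q) (i j k : Fin d)
    (hij : 0 < M i j) (hjk : 0 < M j k) :
    0 < M i k := by
  classical
  set c : ℝ := 1 + ∑ p, |Q p p| with hc
  have hcQ : ∀ p : Fin d, 0 ≤ Q p p + c := by
    intro p
    have h1 : |Q p p| ≤ ∑ q, |Q q q| :=
      Finset.single_le_sum (fun q _ => abs_nonneg (Q q q)) (Finset.mem_univ p)
    have h2 : -Q p p ≤ |Q p p| := neg_le_abs _
    linarith
  set A : Matrix (Fin d) (Fin d) ℝ := Q + c • (1 : Matrix (Fin d) (Fin d) ℝ) with hAdef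
  have hA : ∀ p q, 0 ≤ A p q := by
    intro p q
    simp only [hAdef, Matrix.add_apply, Matrix.smul_apply, Matrix.one_apply, smul_eq_mul]
    by_cases h : p = q
    · subst h; simpa using hcQ p
    · simp only [if_neg h, mul_zero, add_zero]
      exact hQ.1 p q h
  -- M = exp(-c) • exp A
  have hsplit : M = Real.exp (-c) • NormedSpace.exp A := by
    have hQeq : Q = A + (-c) • (1 : Matrix (Fin d) (Fin d) ℝ) := by
      simp [hAdef, add_assoc, ← add_smul]
    have hcomm : Commute A ((-c) • (1 : Matrix (Fin d) (Fin d) ℝ)) :=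
      (Commute.one_right A).smul_right _
    have hdiag : (-c) • (1 : Matrix (Fin d) (Fin d) ℝ)
        = Matrix.diagonal (fun _ => -c) := by
      ext p q
      simp only [Matrix.smul_apply, Matrix.one_apply, Matrix.diagonal_apply, smul_eq_mul]
      split_ifs <;> simp
    rw [hM, hQeq, Matrix.exp_add_of_commute _ _ hcomm, hdiag, Matrix.exp_diagonal]
    rw [show NormedSpace.exp (fun _ : Fin d => -c) = fun _ : Fin d => Real.exp (-c) by
      rw [Pi.exp_def, Real.exp_eq_exp_ℝ]]
    ext p q
    simp [Matrix.mul_apply, Matrix.diagonal_apply, mul_comm]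
  have hepos : 0 < Real.exp (-c) := Real.exp_pos _
  have hMentry : ∀ p q, M p q = Real.exp (-c) * NormedSpace.exp A p q := by
    intro p q; rw [hsplit]; rfl
  -- positivity of exp A entries implies existence of positive power entry
  have hexists : ∀ p q : Fin d, 0 < NormedSpace.exp A p q → ∃ n, 0 < (A ^ n) p q := by
    intro p q h
    by_contra hcon
    push_neg at hcon
    have hz : ∀ n, (n ! : ℝ)⁻¹ * (A ^ n) p q = 0 := fun n => by
      rw [le_antisymm (hcon n) (ExpGenAux.pow_entry_nonneg A hA n p q), mul_zero]
    rw [ExpGenAux.exp_entry, tsum_congr hz, tsum_zero] at h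
    exact lt_irrefl _ h
  have hij' : 0 < NormedSpace.exp A i j := by
    nlinarith [hMentry i j, hij, hepos, Real.exp_pos (-c)]
  have hjk' : 0 < NormedSpace.exp A j k := by
    nlinarith [hMentry j k, hjk, hepos]
  obtain ⟨n, hn⟩ := hexists i j hij'
  obtain ⟨m, hm⟩ := hexists j k hjk'
  have hnm : 0 < (A ^ (n + m)) i k := by
    have hge : (A ^ n) i j * (A ^ m) j k ≤ (A ^ (n + m)) i k := by
      rw [pow_add, Matrix.mul_apply]
      exact Finset.single_le_sum
        (fun l _ => mul_nonneg (ExpGenAux.pow_entry_nonneg A hA n i l)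
          (ExpGenAux.pow_entry_nonneg A hA m l k)) (Finset.mem_univ j)
    exact lt_of_lt_of_le (mul_pos hn hm) hge
  have hterm : 0 < (((n + m) ! : ℝ))⁻¹ * (A ^ (n + m)) i k := by positivity
  have hle : (((n + m) ! : ℝ))⁻¹ * (A ^ (n + m)) i k ≤ NormedSpace.exp A i k := by
    rw [ExpGenAux.exp_entry]
    exact Summable.le_tsum (ExpGenAux.entry_summable A i k) (n + m)
      (fun n' _ => mul_nonneg (by positivity) (ExpGenAux.pow_entry_nonneg A hA n' i k))
  rw [hMentry i k]
  exact mul_pos hepos (lt_of_lt_of_le hterm hle)
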